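/- Let G be a finite connected multigraph with minimum degree at least 3 and cycle space dimension q. If G is not cubic (some vertex has degree > 3), then there exists a connected multigraph G' with the same cycle space dimension q, with one fewer vertex of degree exceeding 3 than G, with minimum degree at least 3, such that G is obtained from G' by contracting a set of edges. -/

import Mathlib

/-- A finite multigraph: vertex type, edge type, each edge has an unordered
pair of endpoints (loops and multiple edges allowed). -/
structure Multigraph where
  V : Type
  E : Type
  [fintypeV : Fintype V]
  [fintypeE : Fintype E]
  [decEqV : DecidableEq V]
  ends : E → Sym2 V

attribute [instance] Multigraph.fintypeV Multigraph.fintypeE Multigraph.decEqV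

/-- Degree of a vertex: a loop counts twice, any other incident edge once. -/
def Multigraph.degree (G : Multigraph) (v : G.V) : ℕ :=
  ∑ e : G.E, (if G.ends e = Sym2.diag v then 2 else if v ∈ G.ends e then 1 else 0)

/-- Adjacency via some edge. -/
def Multigraph.Adj (G : Multigraph) (u v : G.V) : Prop := ∃ e, G.ends e = s(u, v)

/-- Connectedness: nonempty and any two vertices joined by a walk. -/
def Multigraph.Connected (G : Multigraph) : Prop :=
  Nonempty G.V ∧ ∀ u v : G.V, Relation.ReflTransGen G.Adj u v

/-- Cubic: every vertex has degree 3. -/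
def Multigraph.Cubic (G : Multigraph) : Prop := ∀ v : G.V, G.degree v = 3

/-- `G` is obtained from `G'` by contracting a set `S` of edges: there are a
surjection `π` on vertices and a bijection between the non-contracted edges of
`G'` and the edges of `G`, compatible with endpoints; contracted edges become
loops under `π`, and the fibers of `π` are connected via contracted edges. -/
def Multigraph.IsContractionOf (G G' : Multigraph) : Prop :=
  ∃ (S : Set G'.E) (π : G'.V → G.V) (τ : {e : G'.E // e ∉ S} ≃ G.E),
    Function.Surjective π ∧
    (∀ e : {e : G'.E // e ∉ S}, G.ends (τ e) = Sym2.map π (G'.ends e.1)) ∧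
    (∀ e ∈ S, ∃ x : G.V, Sym2.map π (G'.ends e) = s(x, x)) ∧
    (∀ u v : G'.V, π u = π v →
      Relation.ReflTransGen (fun a b => ∃ e ∈ S, G'.ends e = s(a, b)) u v)

/-- The number of vertices of degree exceeding 3. -/
def Multigraph.degGT3Count (G : Multigraph) : ℕ :=
  (Finset.univ.filter fun v : G.V => 3 < G.degree v).card

namespace Stmt15Aux

theorem sym2_rep {α : Type*} (z : Sym2 α) : ∃ a b, z = s(a, b) := by
  induction z using Sym2.ind with
  | _ a b => exact ⟨a, b, rfl⟩

variable (G : Multigraph) (v : G.V)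

/-- Dart condition: `(e, b)` is a dart at `v` if `e` is incident to `v`, with
both booleans allowed for loops at `v` and only `false` otherwise. -/
def dcond (p : G.E × Bool) : Prop :=
  v ∈ G.ends p.1 ∧ (p.2 = false ∨ G.ends p.1 = Sym2.diag v)

instance : DecidablePred (dcond G v) := fun p => by unfold dcond; infer_instance

theorem card_dart : Fintype.card {p : G.E × Bool // dcond G v p} = G.degree v := by
  rw [Fintype.card_subtype, Finset.card_filter, Fintype.sum_prod_type]
  unfold Multigraph.degree
  apply Finset.sum_congr rfl
  intro e _
  rw [Fintype.sum_bool]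
  by_cases hl : G.ends e = Sym2.diag v
  · have hm : v ∈ G.ends e := by rw [hl, Sym2.diag]; simp
    simp [dcond, hl, hm, Sym2.diag]
  · by_cases hm : v ∈ G.ends e
    · simp [dcond, hl, hm]
    · simp [dcond, hl, hm]

def assign (m : ℕ) (i : Fin (m + 4)) : Fin (m + 2) := ⟨min (i.1 - 1) (m + 1), by omega⟩

theorem card_assign_fiber (m : ℕ) (j : Fin (m + 2)) :
    Fintype.card {i : Fin (m + 4) // assign m i = j} =
      (if j.1 = 0 then 2 else if j.1 = m + 1 then 2 else 1) := by
  rw [Fintype.card_subtype]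
  by_cases h0 : j.1 = 0
  · have he : Finset.univ.filter (fun i : Fin (m + 4) => assign m i = j) =
        {⟨0, by omega⟩, ⟨1, by omega⟩} := by
      ext i
      simp only [Finset.mem_filter, Finset.mem_univ, true_and, assign, Fin.ext_iff,
        Finset.mem_insert, Finset.mem_singleton]
      omega
    rw [he, Finset.card_pair (by simp [Fin.ext_iff])]
    simp [h0]
  · by_cases h1 : j.1 = m + 1
    · have he : Finset.univ.filter (fun i : Fin (m + 4) => assign m i = j) =
          {⟨m + 2, by omega⟩, ⟨m + 3, by omega⟩} := by
        ext i
        simp only [Finset.mem_filter, Finset.mem_univ, true_and, assign, Fin.ext_iff,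
          Finset.mem_insert, Finset.mem_singleton]
        omega
      rw [he, Finset.card_pair (by simp [Fin.ext_iff])]
      simp [h0, h1]
    · have he : Finset.univ.filter (fun i : Fin (m + 4) => assign m i = j) =
          {⟨j.1 + 1, by omega⟩} := by
        ext i
        simp only [Finset.mem_filter, Finset.mem_univ, true_and, assign, Fin.ext_iff,
          Finset.mem_singleton]
        omega
      rw [he, Finset.card_singleton]
      simp [h0, h1]

/-- The endpoint relabelling map for a non-loop edge `e`. -/
def splitMap (m : ℕ) (ψ : G.E × Bool → Fin (m + 2)) (e : G.E) (u : G.V) :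
    {u : G.V // u ≠ v} ⊕ Fin (m + 2) :=
  if h : u = v then .inr (ψ (e, false)) else .inl ⟨u, h⟩

/-- The graph obtained from `G` by splitting `v` into a path of `m + 2` internal
vertices of degree 3, the darts at `v` being distributed according to `ψ`. -/
@[reducible] def split (m : ℕ) (ψ : G.E × Bool → Fin (m + 2)) : Multigraph where
  V := {u : G.V // u ≠ v} ⊕ Fin (m + 2)
  E := G.E ⊕ Fin (m + 1)
  fintypeV := inferInstance
  fintypeE := inferInstance
  decEqV := inferInstance
  ends := fun x => match x with
    | .inl e => if G.ends e = Sym2.diag v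
        then s(.inr (ψ (e, false)), .inr (ψ (e, true)))
        else Sym2.map (splitMap G v m ψ e) (G.ends e)
    | .inr k => s(.inr k.castSucc, .inr k.succ)

variable (m : ℕ) (ψ : G.E × Bool → Fin (m + 2))

theorem split_ends_inr (k : Fin (m + 1)) :
    (split G v m ψ).ends (.inr k) = s(.inr k.castSucc, .inr k.succ) := rfl

theorem split_ends_inl_loop {e : G.E} (h : G.ends e = Sym2.diag v) :
    (split G v m ψ).ends (.inl e) = s(.inr (ψ (e, false)), .inr (ψ (e, true))) := by
  simp [split, h]

theorem split_ends_inl_notloop {e : G.E} (h : ¬ G.ends e = Sym2.diag v) :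
    (split G v m ψ).ends (.inl e) = Sym2.map (splitMap G v m ψ e) (G.ends e) := by
  simp [split, h]

theorem splitMap_eq_inl {e : G.E} {a : G.V} {u : {u : G.V // u ≠ v}} :
    splitMap G v m ψ e a = .inl u ↔ a = u.1 := by
  by_cases h : a = v
  · subst h
    simp [splitMap, Ne.symm u.2]
  · simp [splitMap, h, Subtype.ext_iff]

theorem splitMap_eq_inr {e : G.E} {a : G.V} {j : Fin (m + 2)} :
    splitMap G v m ψ e a = .inr j ↔ a = v ∧ ψ (e, false) = j := by
  by_cases h : a = v <;> simp [splitMap, h]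

theorem degree_split (x : {u : G.V // u ≠ v} ⊕ Fin (m + 2)) :
    (split G v m ψ).degree x = ∑ e : G.E ⊕ Fin (m + 1),
      (if (split G v m ψ).ends e = Sym2.diag x then 2
        else if x ∈ (split G v m ψ).ends e then 1 else 0) := rfl

theorem deg_inl (u : {u : G.V // u ≠ v}) :
    (split G v m ψ).degree (.inl u) = G.degree u.1 := by
  rw [degree_split, Fintype.sum_sum_type]
  unfold Multigraph.degree
  have h2 : (∑ k : Fin (m + 1),
      (if (split G v m ψ).ends (.inr k) = Sym2.diag (.inl u) then 2
        else if (Sum.inl u : _) ∈ (split G v m ψ).ends (.inr k) then 1 else 0)) = 0 := by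
    apply Finset.sum_eq_zero
    intro k _
    rw [split_ends_inr]
    simp [Sym2.diag, Sym2.eq_iff, Sym2.mem_iff]
  rw [h2, add_zero]
  apply Finset.sum_congr rfl
  intro e _
  by_cases hl : G.ends e = Sym2.diag v
  · rw [split_ends_inl_loop G v m ψ hl]
    simp [hl, Sym2.diag, Sym2.eq_iff, Sym2.mem_iff, u.2, Ne.symm u.2]
  · obtain ⟨a, b, hab⟩ := sym2_rep (G.ends e)
    rw [split_ends_inl_notloop G v m ψ hl, hab, Sym2.map_pair_eq]
    have e1 : (s(splitMap G v m ψ e a, splitMap G v m ψ e b) = Sym2.diag (Sum.inl u)) ↔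
        (s(a, b) = Sym2.diag u.1) := by
      simp only [Sym2.diag, Sym2.eq_iff, splitMap_eq_inl]
    have e2 : ((Sum.inl u : {u : G.V // u ≠ v} ⊕ Fin (m + 2)) ∈
        s(splitMap G v m ψ e a, splitMap G v m ψ e b)) ↔ u.1 ∈ s(a, b) := by
      simp only [Sym2.mem_iff]
      constructor
      · rintro (h | h) <;> [left; right] <;>
          simpa using ((splitMap_eq_inl G v m ψ).1 h.symm).symm
      · rintro (h | h) <;> [left; right] <;>
          exact ((splitMap_eq_inl G v m ψ).2 h.symm).symm
    simp only [e1, e2]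

theorem deg_inr
    (Hψ : ∀ j : Fin (m + 2),
      (∑ p : G.E × Bool, if dcond G v p ∧ ψ p = j then 1 else 0) =
        if j.1 = 0 then 2 else if j.1 = m + 1 then 2 else 1)
    (j : Fin (m + 2)) : (split G v m ψ).degree (.inr j) = 3 := by
  rw [degree_split, Fintype.sum_sum_type]
  have hold : (∑ e : G.E,
      (if (split G v m ψ).ends (.inl e) = Sym2.diag (.inr j) then 2
        else if (Sum.inr j : _) ∈ (split G v m ψ).ends (.inl e) then 1 else 0)) =
      if j.1 = 0 then 2 else if j.1 = m + 1 then 2 else 1 := by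
    rw [← Hψ j, Fintype.sum_prod_type]
    apply Finset.sum_congr rfl
    intro e _
    rw [Fintype.sum_bool]
    by_cases hl : G.ends e = Sym2.diag v
    · have hm : v ∈ G.ends e := by rw [hl, Sym2.diag]; simp
      have d1 : dcond G v (e, true) := ⟨hm, Or.inr hl⟩
      have d2 : dcond G v (e, false) := ⟨hm, Or.inl rfl⟩
      have hdiag : ((split G v m ψ).ends (.inl e) = Sym2.diag (.inr j)) ↔
          (ψ (e, false) = j ∧ ψ (e, true) = j) := by
        rw [split_ends_inl_loop G v m ψ hl, Sym2.diag, Sym2.eq_iff]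
        constructor
        · rintro (⟨ha, hb⟩ | ⟨ha, hb⟩) <;>
            exact ⟨Sum.inr_injective ha, Sum.inr_injective hb⟩
        · rintro ⟨ha, hb⟩
          exact Or.inl ⟨congrArg Sum.inr ha, congrArg Sum.inr hb⟩
      have hmem2 : ((Sum.inr j : _) ∈ (split G v m ψ).ends (.inl e)) ↔
          (ψ (e, false) = j ∨ ψ (e, true) = j) := by
        rw [split_ends_inl_loop G v m ψ hl, Sym2.mem_iff]
        constructor
        · rintro (h | h) <;> [left; right] <;> exact (Sum.inr_injective h).symm
        · rintro (h | h) <;> [left; right] <;> exact congrArg Sum.inr h.symm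
      simp only [hdiag, hmem2]
      by_cases h1 : ψ (e, false) = j <;> by_cases h2 : ψ (e, true) = j <;>
        simp [h1, h2, d1, d2]
    · obtain ⟨a, b, hab⟩ := sym2_rep (G.ends e)
      have hnb : ¬ (a = v ∧ b = v) := by
        rintro ⟨rfl, rfl⟩
        exact hl (by rw [hab]; rfl)
      rw [split_ends_inl_notloop G v m ψ hl, hab, Sym2.map_pair_eq]
      have d1 : ¬ dcond G v (e, true) := by
        rintro ⟨-, h | h⟩
        · simp at h
        · exact hl h
      have d2 : dcond G v (e, false) ↔ (a = v ∨ b = v) := by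
        unfold dcond
        rw [hab]
        simp [Sym2.mem_iff, eq_comm]
      have hne : ¬ (s(splitMap G v m ψ e a, splitMap G v m ψ e b) = Sym2.diag (Sum.inr j)) := by
        simp only [Sym2.diag, Sym2.eq_iff, splitMap_eq_inr]
        rintro (⟨⟨ha, -⟩, ⟨hb, -⟩⟩ | ⟨⟨ha, -⟩, ⟨hb, -⟩⟩) <;> exact hnb ⟨ha, hb⟩
      have hmem : ((Sum.inr j : {u : G.V // u ≠ v} ⊕ Fin (m + 2)) ∈
          s(splitMap G v m ψ e a, splitMap G v m ψ e b)) ↔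
          ((a = v ∨ b = v) ∧ ψ (e, false) = j) := by
        simp only [Sym2.mem_iff]
        constructor
        · rintro (h | h)
          · obtain ⟨h1, h2⟩ := (splitMap_eq_inr G v m ψ).1 h.symm
            exact ⟨Or.inl h1, h2⟩
          · obtain ⟨h1, h2⟩ := (splitMap_eq_inr G v m ψ).1 h.symm
            exact ⟨Or.inr h1, h2⟩
        · rintro ⟨h1 | h1, h2⟩
          · exact Or.inl ((splitMap_eq_inr G v m ψ).2 ⟨h1, h2⟩).symm
          · by_cases ha : a = v
            · exact Or.inl ((splitMap_eq_inr G v m ψ).2 ⟨ha, h2⟩).symm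
            · exact Or.inr ((splitMap_eq_inr G v m ψ).2 ⟨h1, h2⟩).symm
      have ht := iff_false_intro d1
      have hn := iff_false_intro hne
      simp only [hmem, ht, hn, false_and, if_false, zero_add, d2]
  have hpath : (∑ k : Fin (m + 1),
      (if (split G v m ψ).ends (.inr k) = Sym2.diag (.inr j) then 2
        else if (Sum.inr j : _) ∈ (split G v m ψ).ends (.inr k) then 1 else 0)) =
      (if j.1 < m + 1 then 1 else 0) + (if 0 < j.1 then 1 else 0) := by
    have hterm : ∀ k : Fin (m + 1),
        (if (split G v m ψ).ends (.inr k) = Sym2.diag (.inr j) then 2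
          else if (Sum.inr j : _) ∈ (split G v m ψ).ends (.inr k) then 1 else 0) =
        (if j.1 = k.1 then 1 else 0) + (if j.1 = k.1 + 1 then 1 else 0) := by
      intro k
      have hdiag : ((split G v m ψ).ends (.inr k) = Sym2.diag (.inr j)) ↔ False := by
        rw [split_ends_inr, Sym2.diag, Sym2.eq_iff]
        constructor
        · rintro (⟨ha, hb⟩ | ⟨ha, hb⟩) <;>
          · have e1 : k.castSucc = j := Sum.inr_injective ha
            have e2 : k.succ = j := Sum.inr_injective hb
            have e3 : k.1 = j.1 := congrArg Fin.val e1
            have e4 : k.1 + 1 = j.1 := congrArg Fin.val e2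
            omega
        · exact False.elim
      have hmem' : ((Sum.inr j : _) ∈ (split G v m ψ).ends (.inr k)) ↔
          (j.1 = k.1 ∨ j.1 = k.1 + 1) := by
        rw [split_ends_inr, Sym2.mem_iff]
        constructor
        · rintro (h | h)
          · exact Or.inl (congrArg Fin.val (Sum.inr_injective h))
          · exact Or.inr (congrArg Fin.val (Sum.inr_injective h))
        · rintro (h | h)
          · exact Or.inl (congrArg Sum.inr (Fin.ext h))
          · exact Or.inr (congrArg Sum.inr (Fin.ext h))
      simp only [hdiag, hmem', if_false]
      by_cases h1 : j.1 = k.1 <;> by_cases h2 : j.1 = k.1 + 1 <;> simp [h1, h2] <;> omega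
    rw [Finset.sum_congr rfl (fun k _ => hterm k), Finset.sum_add_distrib]
    congr 1
    · by_cases hj : j.1 < m + 1
      · rw [Finset.sum_congr rfl (fun k _ => if_congr
          (show (j.1 = k.1) ↔ (k = ⟨j.1, hj⟩) by rw [Fin.ext_iff]; exact eq_comm) rfl rfl)]
        simp [hj]
      · rw [if_neg hj]
        apply Finset.sum_eq_zero
        intro k _
        have hk := k.2
        rw [if_neg (by omega)]
    · by_cases hj : 0 < j.1
      · have hj1 : j.1 - 1 < m + 1 := by
          have := j.2
          omega
        rw [Finset.sum_congr rfl (fun k _ => if_congr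
          (show (j.1 = k.1 + 1) ↔ (k = ⟨j.1 - 1, hj1⟩) by
            constructor
            · intro h
              exact Fin.ext (show k.1 = j.1 - 1 by omega)
            · intro h
              have hh : k.1 = j.1 - 1 := congrArg Fin.val h
              omega) rfl rfl)]
        simp [hj]
      · rw [if_neg hj]
        apply Finset.sum_eq_zero
        intro k _
        rw [if_neg (by omega)]
  rw [hold, hpath]
  have := j.2
  split_ifs <;> omega

/-- Adjacency along contracted path edges. -/
def pathRel : ({u : G.V // u ≠ v} ⊕ Fin (m + 2)) → ({u : G.V // u ≠ v} ⊕ Fin (m + 2)) → Prop :=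
  fun a b => ∃ k : Fin (m + 1), (split G v m ψ).ends (.inr k) = s(a, b)

theorem pathRel_symm : Symmetric (pathRel G v m ψ) := by
  rintro a b ⟨k, hk⟩
  exact ⟨k, by rw [hk, Sym2.eq_swap]⟩

theorem pathRel_step (n : ℕ) (hn : n + 1 < m + 2) :
    pathRel G v m ψ (.inr ⟨n, by omega⟩) (.inr ⟨n + 1, hn⟩) := by
  refine ⟨⟨n, by omega⟩, ?_⟩
  rw [split_ends_inr]
  have h1 : (Fin.castSucc ⟨n, by omega⟩ : Fin (m + 2)) = ⟨n, by omega⟩ := Fin.ext rfl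
  have h2 : (Fin.succ (⟨n, by omega⟩ : Fin (m + 1)) : Fin (m + 2)) = ⟨n + 1, hn⟩ := Fin.ext rfl
  rw [h1, h2]

theorem path_conn_zero (j : Fin (m + 2)) :
    Relation.ReflTransGen (pathRel G v m ψ) (.inr ⟨0, by omega⟩) (.inr j) := by
  obtain ⟨n, hn⟩ := j
  induction n with
  | zero => exact .refl
  | succ n ih => exact (ih (by omega)).tail (pathRel_step G v m ψ n hn)

theorem path_conn (j j' : Fin (m + 2)) :
    Relation.ReflTransGen (pathRel G v m ψ) (.inr j) (.inr j') :=
  (haveI : Std.Symm (pathRel G v m ψ) := ⟨fun _ _ h => pathRel_symm G v m ψ h⟩;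
    (Std.Symm.symm _ _ :
      Relation.ReflTransGen (pathRel G v m ψ) _ _ → _)
    (path_conn_zero G v m ψ j)).trans (path_conn_zero G v m ψ j')

theorem pathRel_le_adj : ∀ a b, pathRel G v m ψ a b → (split G v m ψ).Adj a b := by
  rintro a b ⟨k, hk⟩
  exact ⟨.inr k, hk⟩

theorem split_adj_symm : Symmetric (split G v m ψ).Adj := by
  rintro a b ⟨e, he⟩
  exact ⟨e, by rw [he, Sym2.eq_swap]⟩

/-- Canonical embedding of old vertices into the split graph. -/
def lift (u : G.V) : {u : G.V // u ≠ v} ⊕ Fin (m + 2) :=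
  if h : u = v then .inr ⟨0, by omega⟩ else .inl ⟨u, h⟩

theorem lift_splitMap (e : G.E) (c : G.V) :
    Relation.ReflTransGen (split G v m ψ).Adj (lift G v m c) (splitMap G v m ψ e c) := by
  by_cases hc : c = v
  · rw [lift, dif_pos hc, splitMap, dif_pos hc]
    exact Relation.ReflTransGen.mono (pathRel_le_adj G v m ψ) _ _ (path_conn G v m ψ _ _)
  · rw [lift, dif_neg hc, splitMap, dif_neg hc]

theorem adj_lift {a b : G.V} (hab : G.Adj a b) :
    Relation.ReflTransGen (split G v m ψ).Adj (lift G v m a) (lift G v m b) := by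
  obtain ⟨e, he⟩ := hab
  by_cases hl : G.ends e = Sym2.diag v
  · have : a = v ∧ b = v := by
      have h := he.symm.trans hl
      rw [Sym2.diag, Sym2.eq_iff] at h
      tauto
    rw [this.1, this.2]
  · have hadj : (split G v m ψ).Adj (splitMap G v m ψ e a) (splitMap G v m ψ e b) :=
      ⟨.inl e, by rw [split_ends_inl_notloop G v m ψ hl, he, Sym2.map_pair_eq]⟩
    exact ((lift_splitMap G v m ψ e a).trans (.single hadj)).trans
      (haveI : Std.Symm ((split G v m ψ).Adj) := ⟨fun _ _ h => split_adj_symm G v m ψ h⟩;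
        (Std.Symm.symm _ _ :
          Relation.ReflTransGen ((split G v m ψ).Adj) _ _ → _)
        (lift_splitMap G v m ψ e b))

theorem walk_lift {a b : G.V} (h : Relation.ReflTransGen G.Adj a b) :
    Relation.ReflTransGen (split G v m ψ).Adj (lift G v m a) (lift G v m b) := by
  induction h with
  | refl => exact .refl
  | tail _ h2 ih => exact ih.trans (adj_lift G v m ψ h2)

/-- The contraction projection. -/
def proj : ({u : G.V // u ≠ v} ⊕ Fin (m + 2)) → G.V :=
  Sum.elim (fun u => u.1) (fun _ => v)

theorem lift_proj (x : {u : G.V // u ≠ v} ⊕ Fin (m + 2)) :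
    Relation.ReflTransGen (split G v m ψ).Adj x (lift G v m (proj G v m x)) := by
  rcases x with u | k
  · rw [proj, Sum.elim_inl, lift, dif_neg u.2]
  · rw [proj, Sum.elim_inr, lift, dif_pos rfl]
    exact Relation.ReflTransGen.mono (pathRel_le_adj G v m ψ) _ _ (path_conn G v m ψ _ _)

/-- The edge bijection of the contraction. -/
def tau : {e : G.E ⊕ Fin (m + 1) //
    e ∉ Set.range (Sum.inr : Fin (m + 1) → G.E ⊕ Fin (m + 1))} ≃ G.E where
  toFun := fun e => match e with
    | ⟨.inl a, _⟩ => a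
    | ⟨.inr k, h⟩ => absurd ⟨k, rfl⟩ h
  invFun := fun a => ⟨.inl a, by rintro ⟨k, hk⟩; simp at hk⟩
  left_inv := by
    rintro ⟨a | k, h⟩
    · rfl
    · exact absurd ⟨k, rfl⟩ h
  right_inv := fun a => rfl

theorem split_isContraction : G.IsContractionOf (split G v m ψ) := by
  refine ⟨Set.range Sum.inr, proj G v m, tau G m, ?_, ?_, ?_, ?_⟩
  · intro u
    by_cases h : u = v
    · exact ⟨.inr ⟨0, by omega⟩, h.symm⟩
    · exact ⟨.inl ⟨u, h⟩, rfl⟩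
  · rintro ⟨a | k, he0⟩
    · show G.ends a = Sym2.map (proj G v m) ((split G v m ψ).ends (.inl a))
      by_cases hl : G.ends a = Sym2.diag v
      · rw [split_ends_inl_loop G v m ψ hl, Sym2.map_pair_eq, hl]
        rfl
      · rw [split_ends_inl_notloop G v m ψ hl, Sym2.map_map]
        have hid : proj G v m ∘ splitMap G v m ψ a = id := by
          funext u
          by_cases h : u = v <;> simp [splitMap, proj, h]
        rw [hid, Sym2.map_id]
        rfl
    · exact absurd ⟨k, rfl⟩ he0
  · rintro e ⟨k, rfl⟩
    refine ⟨v, ?_⟩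
    rw [split_ends_inr, Sym2.map_pair_eq]
    rfl
  · intro x y hxy
    rcases x with u | jx <;> rcases y with u' | jy
    · have : u = u' := Subtype.ext hxy
      rw [this]
    · exact absurd hxy u.2
    · exact absurd hxy.symm u'.2
    · exact Relation.ReflTransGen.mono (fun a b => by
        rintro ⟨k, hk⟩
        exact ⟨.inr k, ⟨k, rfl⟩, hk⟩) _ _ (path_conn G v m ψ jx jy)

theorem degGT3_split
    (Hψ : ∀ j : Fin (m + 2),
      (∑ p : G.E × Bool, if dcond G v p ∧ ψ p = j then 1 else 0) =
        if j.1 = 0 then 2 else if j.1 = m + 1 then 2 else 1) :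
    (split G v m ψ).degGT3Count =
      Fintype.card {x : {u : G.V // u ≠ v} // 3 < G.degree x.1} := by
  unfold Multigraph.degGT3Count
  rw [Finset.card_filter]
  have h0 : (∑ x : (split G v m ψ).V, if 3 < (split G v m ψ).degree x then 1 else 0) =
      ∑ x : {u : G.V // u ≠ v} ⊕ Fin (m + 2),
        (if 3 < (split G v m ψ).degree x then 1 else 0) := rfl
  rw [h0, Fintype.sum_sum_type]
  have h2 : (∑ j : Fin (m + 2), if 3 < (split G v m ψ).degree (.inr j) then 1 else 0) = 0 := by
    apply Finset.sum_eq_zero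
    intro j _
    rw [deg_inr G v m ψ Hψ j]
    simp
  rw [h2, add_zero, Fintype.card_subtype, Finset.card_filter]
  apply Finset.sum_congr rfl
  intro u _
  rw [deg_inl G v m ψ u]

end Stmt15Aux

open Stmt15Aux in
/-- If a finite connected multigraph `G` of minimum degree ≥ 3
and cycle space dimension `q` is not cubic, then there is a connected
multigraph `G'` with the same cycle space dimension, minimum degree ≥ 3 and
one fewer vertex of degree exceeding 3, such that `G` is obtained from `G'`
by contracting a set of edges. -/
theorem stmt15 (G : Multigraph) (hconn : G.Connected) (q : ℕ)
    (hq : Fintype.card G.E + 1 = Fintype.card G.V + q)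
    (hmin : ∀ v : G.V, 3 ≤ G.degree v)
    (hnotcubic : ∃ v : G.V, 3 < G.degree v) :
    ∃ G' : Multigraph, G'.Connected ∧
      Fintype.card G'.E + 1 = Fintype.card G'.V + q ∧
      (∀ v : G'.V, 3 ≤ G'.degree v) ∧
      G'.degGT3Count + 1 = G.degGT3Count ∧
      G.IsContractionOf G' := by
  classical
  obtain ⟨v, hv⟩ := hnotcubic
  obtain ⟨m, hd4⟩ : ∃ m, G.degree v = m + 4 := ⟨G.degree v - 4, by omega⟩
  have hcard : Fintype.card {p : G.E × Bool // dcond G v p} = m + 4 := by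
    rw [card_dart, hd4]
  let φ : {p : G.E × Bool // dcond G v p} ≃ Fin (m + 4) := Fintype.equivFinOfCardEq hcard
  let ψ : G.E × Bool → Fin (m + 2) := fun p =>
    if h : dcond G v p then assign m (φ ⟨p, h⟩) else ⟨0, by omega⟩
  have hψdef : ∀ (q : {p : G.E × Bool // dcond G v p}), ψ q.1 = assign m (φ q) :=
    fun q => dif_pos q.2
  have Hψ : ∀ j : Fin (m + 2),
      (∑ p : G.E × Bool, if dcond G v p ∧ ψ p = j then 1 else 0) =
        if j.1 = 0 then 2 else if j.1 = m + 1 then 2 else 1 := by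
    intro j
    have h1 : (∑ p : G.E × Bool, if dcond G v p ∧ ψ p = j then 1 else 0)
        = Fintype.card {p : G.E × Bool // dcond G v p ∧ ψ p = j} := by
      rw [Fintype.card_subtype, Finset.card_filter]
    rw [h1, ← card_assign_fiber m j]
    apply Fintype.card_congr
    refine (Equiv.subtypeSubtypeEquivSubtypeInter _ _).symm.trans (φ.subtypeEquiv ?_)
    intro p
    rw [hψdef p]
  refine ⟨split G v m ψ, ?_, ?_, ?_, ?_, split_isContraction G v m ψ⟩
  · constructor
    · exact ⟨.inr ⟨0, by omega⟩⟩
    · intro x y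
      have hx := lift_proj G v m ψ x
      have hy := lift_proj G v m ψ y
      have hw := walk_lift G v m ψ (hconn.2 (proj G v m x) (proj G v m y))
      exact (hx.trans hw).trans
        (haveI : Std.Symm ((split G v m ψ).Adj) := ⟨fun _ _ h => split_adj_symm G v m ψ h⟩;
          (Std.Symm.symm _ _ :
            Relation.ReflTransGen ((split G v m ψ).Adj) _ _ → _) hy)
  · have hE : Fintype.card (split G v m ψ).E = Fintype.card G.E + (m + 1) := by
      show Fintype.card (G.E ⊕ Fin (m + 1)) = _
      rw [Fintype.card_sum, Fintype.card_fin]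
    have hsub : Fintype.card {u : G.V // u ≠ v}
        = Fintype.card G.V - Fintype.card {u : G.V // u = v} :=
      Fintype.card_subtype_compl _
    have hone : Fintype.card {u : G.V // u = v} = 1 := Fintype.card_subtype_eq v
    have hV : Fintype.card (split G v m ψ).V
        = Fintype.card {u : G.V // u ≠ v} + (m + 2) := by
      show Fintype.card ({u : G.V // u ≠ v} ⊕ Fin (m + 2)) = _
      rw [Fintype.card_sum, Fintype.card_fin]
    have hpos : 0 < Fintype.card G.V := Fintype.card_pos_iff.mpr hconn.1
    omega
  · intro x
    have : ∀ y : {u : G.V // u ≠ v} ⊕ Fin (m + 2), 3 ≤ (split G v m ψ).degree y := by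
      rintro (u | j)
      · rw [deg_inl G v m ψ u]
        exact hmin u.1
      · rw [deg_inr G v m ψ Hψ j]
    exact this x
  · rw [degGT3_split G v m ψ Hψ]
    have he : Fintype.card {x : {u : G.V // u ≠ v} // 3 < G.degree x.1}
        = Fintype.card {u : G.V // u ≠ v ∧ 3 < G.degree u} :=
      Fintype.card_congr (Equiv.subtypeSubtypeEquivSubtypeInter
        (fun u : G.V => u ≠ v) (fun u : G.V => 3 < G.degree u))
    rw [he]
    unfold Multigraph.degGT3Count
    rw [Fintype.card_subtype]
    have hf : Finset.univ.filter (fun u : G.V => u ≠ v ∧ 3 < G.degree u)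
        = (Finset.univ.filter (fun u : G.V => 3 < G.degree u)).erase v := by
      ext u
      simp only [Finset.mem_filter, Finset.mem_univ, true_and, Finset.mem_erase]
    rw [hf, Finset.card_erase_of_mem (by simp [hv])]
    have : 0 < (Finset.univ.filter (fun u : G.V => 3 < G.degree u)).card :=
      Finset.card_pos.mpr ⟨v, by simp [hv]⟩
    omega
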